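/- Let W: ℝ^d → ℝ be convex, radially symmetric (W(x) = w(|x|)), and differentiable, and let a ≥ 2. Then for all x, y ∈ ℝ^d and t ≥ 0, the function G(t) = W(y - x + t(|y|^(a-2)y - |x|^(a-2)x)) satisfies G'(0) ≥ 0; in particular (|y|^(a-2)y - |x|^(a-2)x)·∇W(y - x) ≥ 0. -/

import Mathlib

open scoped RealInnerProductSpace

private lemma rpow_sub_two_mul (a q : ℝ) (ha : 2 ≤ a) (hq : 0 ≤ q) :
    q ^ (a - 2) * q = q ^ (a - 1) := by
  rcases eq_or_lt_of_le hq with rfl | hq'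
  · rw [mul_zero, Real.zero_rpow (by linarith : a - 1 ≠ 0)]
  · calc q ^ (a - 2) * q = q ^ (a - 2) * q ^ (1 : ℝ) := by rw [Real.rpow_one]
      _ = q ^ (a - 2 + 1) := (Real.rpow_add hq' _ _).symm
      _ = q ^ (a - 1) := by rw [show a - 2 + 1 = a - 1 by ring]

private lemma inner_key {d : ℕ} (a : ℝ) (ha : 2 ≤ a) (x y : EuclideanSpace ℝ (Fin d)) :
    0 ≤ ⟪y - x, ‖y‖ ^ (a - 2) • y - ‖x‖ ^ (a - 2) • x⟫ := by
  have hp : (0:ℝ) ≤ ‖x‖ := norm_nonneg _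
  have hq : (0:ℝ) ≤ ‖y‖ := norm_nonneg _
  have hr : ⟪x, y⟫ ≤ ‖x‖ * ‖y‖ := real_inner_le_norm x y
  have expand : ⟪y - x, ‖y‖ ^ (a - 2) • y - ‖x‖ ^ (a - 2) • x⟫
      = ‖y‖ ^ (a-2) * ‖y‖^2 + ‖x‖ ^ (a-2) * ‖x‖^2
        - (‖y‖ ^ (a-2) + ‖x‖ ^ (a-2)) * ⟪x, y⟫ := by
    simp only [inner_sub_left, inner_sub_right, real_inner_smul_right,
      real_inner_self_eq_norm_sq, real_inner_comm x y]
    ring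
  rw [expand]
  have hA : 0 ≤ ‖y‖ ^ (a-2) := Real.rpow_nonneg hq _
  have hB : 0 ≤ ‖x‖ ^ (a-2) := Real.rpow_nonneg hp _
  have step1 : (‖y‖ ^ (a-2) + ‖x‖ ^ (a-2)) * ⟪x, y⟫
      ≤ (‖y‖ ^ (a-2) + ‖x‖ ^ (a-2)) * (‖x‖ * ‖y‖) :=
    mul_le_mul_of_nonneg_left hr (by linarith)
  have e : ‖y‖ ^ (a-2) * ‖y‖^2 + ‖x‖ ^ (a-2) * ‖x‖^2
      - (‖y‖ ^ (a-2) + ‖x‖ ^ (a-2)) * (‖x‖ * ‖y‖)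
      = (‖y‖ - ‖x‖) * (‖y‖ ^ (a-1) - ‖x‖ ^ (a-1)) := by
    rw [← rpow_sub_two_mul a ‖y‖ ha hq, ← rpow_sub_two_mul a ‖x‖ ha hp]; ring
  have step2 : 0 ≤ (‖y‖ - ‖x‖) * (‖y‖ ^ (a-1) - ‖x‖ ^ (a-1)) := by
    rcases le_total ‖x‖ ‖y‖ with h | h
    · have := Real.rpow_le_rpow hp h (by linarith : (0:ℝ) ≤ a - 1)
      exact mul_nonneg (by linarith) (by linarith)
    · have := Real.rpow_le_rpow hq h (by linarith : (0:ℝ) ≤ a - 1)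
      nlinarith
  linarith

private lemma radial_mono {d : ℕ} (W : EuclideanSpace ℝ (Fin d) → ℝ)
    (w : ℝ → ℝ) (hrad : ∀ x, W x = w ‖x‖)
    (hconv : ConvexOn ℝ Set.univ W)
    {u z : EuclideanSpace ℝ (Fin d)} (h : ‖u‖ ≤ ‖z‖) : W u ≤ W z := by
  rcases eq_or_ne z 0 with rfl | hz
  · have hu : u = 0 := by
      have : ‖u‖ = 0 := le_antisymm (by simpa using h) (norm_nonneg u)
      simpa using this
    simp [hu]
  · have hzn : (0:ℝ) < ‖z‖ := norm_pos_iff.mpr hz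
    set θ : ℝ := (1 + ‖u‖ / ‖z‖) / 2 with hθ
    have hu0 : 0 ≤ ‖u‖ / ‖z‖ := div_nonneg (norm_nonneg _) hzn.le
    have hu1 : ‖u‖ / ‖z‖ ≤ 1 := (div_le_one hzn).mpr h
    have hθ0 : 0 ≤ θ := by rw [hθ]; linarith
    have hθ1 : θ ≤ 1 := by rw [hθ]; linarith
    have key : W (θ • z + (1 - θ) • (-z)) ≤ θ * W z + (1 - θ) * W (-z) :=
      hconv.2 (Set.mem_univ z) (Set.mem_univ (-z)) hθ0 (by linarith) (by ring)
    have hWneg : W (-z) = W z := by rw [hrad, hrad, norm_neg]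
    have hcomb : θ • z + (1 - θ) • (-z) = (‖u‖ / ‖z‖) • z := by
      rw [smul_neg, ← sub_eq_add_neg, ← sub_smul]
      congr 1
      rw [hθ]; ring
    have hnorm : ‖(‖u‖ / ‖z‖) • z‖ = ‖u‖ := by
      rw [norm_smul, Real.norm_of_nonneg hu0, div_mul_cancel₀ _ hzn.ne']
    have hWu : W u = W ((‖u‖ / ‖z‖) • z) := by rw [hrad, hrad, hnorm]
    calc W u = W (θ • z + (1 - θ) • (-z)) := by rw [hWu, hcomb]
      _ ≤ θ * W z + (1 - θ) * W (-z) := key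
      _ = W z := by rw [hWneg]; ring

/-- for a convex, radially symmetric, differentiable `W` and `a ≥ 2`, the
function `G(t) = W(y - x + t(‖y‖^(a-2) y - ‖x‖^(a-2) x))` satisfies `G'(0) ≥ 0`;
in particular `(‖y‖^(a-2) y - ‖x‖^(a-2) x) ⬝ ∇W(y - x) ≥ 0`. -/
theorem radial_convex_directional_derivative_nonneg
    (d : ℕ) (a : ℝ) (ha : 2 ≤ a)
    (W : EuclideanSpace ℝ (Fin d) → ℝ)
    (W' : EuclideanSpace ℝ (Fin d) → EuclideanSpace ℝ (Fin d))
    (w : ℝ → ℝ) (hrad : ∀ x, W x = w ‖x‖)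
    (hconv : ConvexOn ℝ Set.univ W)
    (hdiff : ∀ x, HasGradientAt W (W' x) x)
    (x y : EuclideanSpace ℝ (Fin d)) :
    0 ≤ deriv (fun t : ℝ =>
        W (y - x + t • (‖y‖ ^ (a - 2) • y - ‖x‖ ^ (a - 2) • x))) 0
    ∧ 0 ≤ (inner ℝ (‖y‖ ^ (a - 2) • y - ‖x‖ ^ (a - 2) • x) (W' (y - x)) : ℝ) := by
  set v : EuclideanSpace ℝ (Fin d) := ‖y‖ ^ (a - 2) • y - ‖x‖ ^ (a - 2) • x with hv
  have hkey : 0 ≤ ⟪y - x, v⟫ := inner_key a ha x y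
  -- the norm does not decrease along the ray
  have hnorm : ∀ t : ℝ, 0 ≤ t → ‖y - x‖ ≤ ‖y - x + t • v‖ := by
    intro t ht
    have hsq : ‖y - x‖ ^ 2 ≤ ‖y - x + t • v‖ ^ 2 := by
      rw [norm_add_sq_real, real_inner_smul_right]
      nlinarith [mul_nonneg ht hkey, sq_nonneg ‖t • v‖]
    have := Real.sqrt_le_sqrt hsq
    rwa [Real.sqrt_sq (norm_nonneg _), Real.sqrt_sq (norm_nonneg _)] at this
  -- G(t) ≥ G(0) for t ≥ 0
  have hG : ∀ t : ℝ, 0 ≤ t → W (y - x) ≤ W (y - x + t • v) := fun t ht =>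
    radial_mono W w hrad hconv (hnorm t ht)
  -- G has derivative ⟪W'(y-x), v⟫ at 0
  have hF : HasFDerivAt W ((InnerProductSpace.toDual ℝ _) (W' (y - x)))
      (y - x + (0:ℝ) • v) := by simpa using hasGradientAt_iff_hasFDerivAt.mp (hdiff (y - x))
  have hL : HasDerivAt (fun t : ℝ => y - x + t • v) v 0 := by
    simpa using ((hasDerivAt_id (0:ℝ)).smul_const v).const_add (y - x)
  have hD : HasDerivAt (fun t : ℝ => W (y - x + t • v)) (⟪W' (y - x), v⟫) 0 := by
    have := hF.comp_hasDerivAt 0 hL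
    simp at this; exact this
  -- derivative at 0 is nonneg since G(t) ≥ G(0) for t ≥ 0
  have hpos : 0 ≤ ⟪W' (y - x), v⟫ := by
    have hsl : Filter.Tendsto (slope (fun t : ℝ => W (y - x + t • v)) 0)
        (nhdsWithin 0 (Set.Ioi 0)) (nhds (⟪W' (y - x), v⟫)) := by
      have h' := (hD.hasDerivWithinAt (s := Set.Ici 0))
      rw [hasDerivWithinAt_iff_tendsto_slope] at h'
      simpa [Set.Ici_sdiff_left] using h'
    refine ge_of_tendsto hsl ?_
    filter_upwards [self_mem_nhdsWithin] with t ht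
    have ht0 : (0:ℝ) < t := ht
    have hWle := hG t ht0.le
    have h00 : W (y - x + (0:ℝ) • v) = W (y - x) := by simp
    rw [slope_def_field]
    simp only [sub_zero, h00]
    exact div_nonneg (by linarith) ht0.le
  constructor
  · rw [hD.deriv]; exact hpos
  · rw [real_inner_comm]; exact hpos
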